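/- Let G be a finite multigraph with n edges whose κ-isolated vertices have total volume at most εn, with 0 < ε < 1/2 and κ_ε = (1−ε)κ. Consider the process G₀ = G, and at each step i ≥ 1, if G_{i−1} is nonempty and not a κ_ε-expander, choose a κ_ε-bad set S_i of G_{i−1} and set G_i = G_{i−1}\S_i; stop otherwise. Then every vertex removed by this process is κ_ε-isolated in G, i.e. ∪_{1≤i≤τ} S_i ⊆ Isol_{κ_ε}(G) ⊆ Isol_κ(G), where τ is the final step. -/

import Mathlib

open Finset
open scoped Classical

-- `m x y` is the number of oriented edges (darts) from `x` to `y` in a multigraph;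
-- a loop at `x` contributes two darts to `m x x`.

/-- Number of oriented edges from `X` to `Y`. -/
def eG {V : Type*} [DecidableEq V] (m : V → V → ℕ) (X Y : Finset V) : ℕ :=
  ∑ x ∈ X, ∑ y ∈ Y, m x y

/-- Volume of `X` inside the subgraph induced on `A`. -/
def volOn {V : Type*} [DecidableEq V] (m : V → V → ℕ) (A X : Finset V) : ℕ :=
  eG m X A

/-- The subgraph induced on `X` is connected. -/
def ConnOn {V : Type*} [DecidableEq V] (m : V → V → ℕ) (X : Finset V) : Prop :=
  ∀ x ∈ X, ∀ y ∈ X,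
    Relation.ReflTransGen (fun a b => a ∈ X ∧ b ∈ X ∧ 0 < m a b) x y

/-- `X` is a `κ`-bad set of the subgraph induced on `A`. -/
def BadSet {V : Type*} [DecidableEq V] (m : V → V → ℕ) (κ : ℝ) (A X : Finset V) : Prop :=
  X ⊆ A ∧ X.Nonempty ∧ ConnOn m X ∧
    2 * (volOn m A X : ℝ) ≤ (volOn m A A : ℝ) ∧
    (eG m X (A \ X) : ℝ) < κ * (volOn m A X : ℝ)

/-- `X` is a strong `κ`-bad set of the subgraph induced on `A`. -/
def StrongBadSet {V : Type*} [DecidableEq V] (m : V → V → ℕ) (κ : ℝ) (A X : Finset V) : Prop :=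
  BadSet m κ A X ∧ ConnOn m (A \ X)

/-- The set of `κ`-isolated vertices of the whole graph. -/
noncomputable def Isol {V : Type*} [Fintype V] [DecidableEq V] (m : V → V → ℕ) (κ : ℝ) :
    Finset V :=
  univ.filter (fun v => ∃ X, BadSet m κ univ X ∧ v ∈ X)

/-- The set of strongly `κ`-isolated vertices of the whole graph. -/
noncomputable def IsolStrong {V : Type*} [Fintype V] [DecidableEq V] (m : V → V → ℕ) (κ : ℝ) :
    Finset V :=
  univ.filter (fun v => ∃ X, StrongBadSet m κ univ X ∧ v ∈ X)

/-- The subgraph induced on `A` is a `κ`-expander. -/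
def IsExpanderOn {V : Type*} [DecidableEq V] (m : V → V → ℕ) (κ : ℝ) (A : Finset V) : Prop :=
  ∀ X ⊆ A, 2 * (volOn m A X : ℝ) ≤ (volOn m A A : ℝ) →
    κ * (volOn m A X : ℝ) ≤ (eG m X (A \ X) : ℝ)

section Aux
variable {V : Type*} [DecidableEq V]

theorem eG_comm (m : V → V → ℕ) (hsym : ∀ x y, m x y = m y x) (X Y : Finset V) :
    eG m X Y = eG m Y X := by
  unfold eG
  rw [Finset.sum_comm]
  exact Finset.sum_congr rfl fun y _ => Finset.sum_congr rfl fun x _ => hsym x y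

theorem eG_union_left (m : V → V → ℕ) {X X' : Finset V} (Y : Finset V) (h : Disjoint X X') :
    eG m (X ∪ X') Y = eG m X Y + eG m X' Y :=
  Finset.sum_union h

theorem eG_union_right (m : V → V → ℕ) (X : Finset V) {Y Y' : Finset V} (h : Disjoint Y Y') :
    eG m X (Y ∪ Y') = eG m X Y + eG m X Y' := by
  unfold eG
  rw [← Finset.sum_add_distrib]
  exact Finset.sum_congr rfl fun x _ => Finset.sum_union h

theorem eG_mono (m : V → V → ℕ) {X X' Y Y' : Finset V} (hX : X ⊆ X') (hY : Y ⊆ Y') :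
    eG m X Y ≤ eG m X' Y' := by
  unfold eG
  refine le_trans (Finset.sum_le_sum fun x _ => ?_) (Finset.sum_le_sum_of_subset hX)
  exact Finset.sum_le_sum_of_subset hY

theorem eG_zero (m : V → V → ℕ) {X Y : Finset V} (h : ∀ x ∈ X, ∀ y ∈ Y, m x y = 0) :
    eG m X Y = 0 :=
  Finset.sum_eq_zero fun x hx => Finset.sum_eq_zero fun y hy => h x hx y hy

theorem eG_pointwise_zero (m : V → V → ℕ) {X Y : Finset V} (h : eG m X Y = 0)
    {x y : V} (hx : x ∈ X) (hy : y ∈ Y) : m x y = 0 := by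
  by_contra hne
  have h1 : 0 < m x y := Nat.pos_of_ne_zero hne
  have h2 : m x y ≤ eG m X Y := by
    unfold eG
    calc m x y ≤ ∑ y' ∈ Y, m x y' := Finset.single_le_sum (fun _ _ => Nat.zero_le _) hy
    _ ≤ _ := Finset.single_le_sum (f := fun x' => ∑ y' ∈ Y, m x' y') (fun _ _ => Nat.zero_le _) hx
  omega

theorem le_eG (m : V → V → ℕ) {X Y : Finset V} {x y : V} (hx : x ∈ X) (hy : y ∈ Y) :
    m x y ≤ eG m X Y := by
  unfold eG
  calc m x y ≤ ∑ y' ∈ Y, m x y' := Finset.single_le_sum (fun _ _ => Nat.zero_le _) hy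
  _ ≤ _ := Finset.single_le_sum (f := fun x' => ∑ y' ∈ Y, m x' y') (fun _ _ => Nat.zero_le _) hx

theorem exists_of_eG_pos (m : V → V → ℕ) {X Y : Finset V} (h : 0 < eG m X Y) :
    ∃ x ∈ X, ∃ y ∈ Y, 0 < m x y := by
  by_contra hc
  push_neg at hc
  have : eG m X Y = 0 := eG_zero m fun x hx y hy => Nat.le_zero.mp (hc x hx y hy)
  omega

end Aux
set_option linter.unusedSectionVars false

section CompDefs
variable {V : Type*} [DecidableEq V]

def creach (m : V → V → ℕ) (Y : Finset V) (a b : V) : Prop :=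
  Relation.ReflTransGen (fun p q => p ∈ Y ∧ q ∈ Y ∧ 0 < m p q) a b

noncomputable def compo (m : V → V → ℕ) (Y : Finset V) (a : V) : Finset V :=
  Y.filter (creach m Y a)

theorem creach_trans {m : V → V → ℕ} {Y : Finset V} {a b c : V}
    (h1 : creach m Y a b) (h2 : creach m Y b c) : creach m Y a c :=
  Relation.ReflTransGen.trans h1 h2

theorem creach_symm {m : V → V → ℕ} (hsym : ∀ x y, m x y = m y x) {Y : Finset V} {a b : V}
    (h : creach m Y a b) : creach m Y b a := by
  refine (@Relation.ReflTransGen.stdSymm _ _ ⟨?_⟩).symm _ _ h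
  rintro p q ⟨hp, hq, hpq⟩
  exact ⟨hq, hp, by rw [hsym q p]; exact hpq⟩

theorem creach_mono {m : V → V → ℕ} {Y Y' : Finset V} (hYY : Y ⊆ Y') {a b : V}
    (h : creach m Y a b) : creach m Y' a b := by
  refine Relation.ReflTransGen.mono ?_ _ _ h
  rintro p q ⟨hp, hq, hpq⟩
  exact ⟨hYY hp, hYY hq, hpq⟩

theorem mem_compo_self {m : V → V → ℕ} {Y : Finset V} {a : V} (ha : a ∈ Y) :
    a ∈ compo m Y a := by
  simp [compo, ha, creach]
  exact Relation.ReflTransGen.refl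

theorem compo_subset (m : V → V → ℕ) (Y : Finset V) (a : V) : compo m Y a ⊆ Y :=
  Finset.filter_subset _ _

theorem mem_compo {m : V → V → ℕ} {Y : Finset V} {a b : V} :
    b ∈ compo m Y a ↔ b ∈ Y ∧ creach m Y a b := by
  simp [compo]

/-- key characterization : if `Z` is connected, contained, and has no edges to the rest,
then it is the component of any of its members. -/
theorem compo_eq_of {m : V → V → ℕ} {Y Z : Finset V} {v : V} (hv : v ∈ Z) (hZY : Z ⊆ Y)
    (hconn : ConnOn m Z) (hedge : ∀ x ∈ Z, ∀ y ∈ Y, y ∉ Z → m x y = 0) :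
    compo m Y v = Z := by
  apply Finset.Subset.antisymm
  · intro u hu
    rw [mem_compo] at hu
    obtain ⟨huY, hr⟩ := hu
    clear huY
    induction hr with
    | refl => exact hv
    | tail _hab hbc ih =>
      obtain ⟨hb, hc, hbc'⟩ := hbc
      by_contra hcZ
      have := hedge _ ih _ hc hcZ
      omega
  · intro z hz
    rw [mem_compo]
    refine ⟨hZY hz, ?_⟩
    have := hconn v hv z hz
    exact creach_mono hZY (by exact this)

theorem compo_mem_eq {m : V → V → ℕ} (hsym : ∀ x y, m x y = m y x) {Y : Finset V} {v u : V}
    (hu : u ∈ compo m Y v) : compo m Y u = compo m Y v := by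
  rw [mem_compo] at hu
  obtain ⟨huY, hr⟩ := hu
  ext b
  rw [mem_compo, mem_compo]
  constructor
  · rintro ⟨hb, h⟩; exact ⟨hb, creach_trans hr h⟩
  · rintro ⟨hb, h⟩; exact ⟨hb, creach_trans (creach_symm hsym hr) h⟩

theorem compo_no_edge {m : V → V → ℕ} {Y : Finset V} {v : V} :
    ∀ x ∈ compo m Y v, ∀ y ∈ Y, y ∉ compo m Y v → m x y = 0 := by
  intro x hx y hy hyc
  by_contra hne
  rw [mem_compo] at hx
  apply hyc
  rw [mem_compo]
  refine ⟨hy, creach_trans hx.2 (Relation.ReflTransGen.single ⟨hx.1, hy, Nat.pos_of_ne_zero hne⟩)⟩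

theorem compo_connOn {m : V → V → ℕ} (hsym : ∀ x y, m x y = m y x) {Y : Finset V} {v : V} :
    ConnOn m (compo m Y v) := by
  -- first: any creach path starting inside the component stays inside and refines
  have key : ∀ {x y : V}, creach m Y x y → x ∈ compo m Y v →
      Relation.ReflTransGen
        (fun a b => a ∈ compo m Y v ∧ b ∈ compo m Y v ∧ 0 < m a b) x y := by
    intro x y h hx
    induction h with
    | refl => exact Relation.ReflTransGen.refl
    | @tail b c hab hbc ih =>
      obtain ⟨hbY, hcY, hbc'⟩ := hbc
      have hxv : creach m Y v x := (mem_compo.mp hx).2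
      have hbcomp : b ∈ compo m Y v := mem_compo.mpr ⟨hbY, creach_trans hxv hab⟩
      have hccomp : c ∈ compo m Y v :=
        mem_compo.mpr ⟨hcY, creach_trans (creach_trans hxv hab)
          (Relation.ReflTransGen.single ⟨hbY, hcY, hbc'⟩)⟩
      exact Relation.ReflTransGen.tail ih ⟨hbcomp, hccomp, hbc'⟩
  intro x hx y hy
  have hxy : creach m Y x y :=
    creach_trans (creach_symm hsym (mem_compo.mp hx).2) (mem_compo.mp hy).2
  exact key hxy hx

end CompDefs

section Comps
variable {V : Type*} [DecidableEq V]

noncomputable def comps (m : V → V → ℕ) (Y : Finset V) : Finset (Finset V) :=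
  Y.image (compo m Y)

theorem mem_comps {m : V → V → ℕ} {Y : Finset V} {c : Finset V} :
    c ∈ comps m Y ↔ ∃ v ∈ Y, compo m Y v = c := by
  simp [comps]

theorem comps_pairwiseDisjoint {m : V → V → ℕ} (hsym : ∀ x y, m x y = m y x) (Y : Finset V) :
    (↑(comps m Y) : Set (Finset V)).PairwiseDisjoint id := by
  intro c hc c' hc' hne
  rw [Finset.mem_coe, mem_comps] at hc
  rw [Finset.mem_coe, mem_comps] at hc'
  show Disjoint (id _) (id _)
  simp only [id]
  obtain ⟨v, hv, rfl⟩ := hc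
  obtain ⟨v', hv', rfl⟩ := hc'
  rw [Finset.disjoint_left]
  intro u hu hu'
  exact hne (by rw [← compo_mem_eq hsym hu, ← compo_mem_eq hsym hu'])

theorem biUnion_comps (m : V → V → ℕ) (Y : Finset V) :
    (comps m Y).biUnion id = Y := by
  apply Finset.Subset.antisymm
  · intro x hx
    simp only [Finset.mem_biUnion, id] at hx
    obtain ⟨c, hc, hxc⟩ := hx
    rw [mem_comps] at hc
    obtain ⟨v, _, rfl⟩ := hc
    exact compo_subset m Y v hxc
  · intro x hx
    simp only [Finset.mem_biUnion, id]
    exact ⟨compo m Y x, mem_comps.mpr ⟨x, hx, rfl⟩, mem_compo_self hx⟩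

theorem sum_comps (m : V → V → ℕ) (hsym : ∀ x y, m x y = m y x) (Y : Finset V) (f : V → ℕ) :
    ∑ c ∈ comps m Y, ∑ x ∈ c, f x = ∑ x ∈ Y, f x := by
  conv_rhs => rw [← biUnion_comps m Y]
  exact (Finset.sum_biUnion (comps_pairwiseDisjoint hsym Y)).symm

theorem eG_eq_sum_comps (m : V → V → ℕ) (hsym : ∀ x y, m x y = m y x) (Y Z : Finset V) :
    eG m Y Z = ∑ c ∈ comps m Y, eG m c Z :=
  (sum_comps m hsym Y (fun x => ∑ y ∈ Z, m x y)).symm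

theorem volOn_eq_sum_comps (m : V → V → ℕ) (hsym : ∀ x y, m x y = m y x) [Fintype V]
    (Y : Finset V) :
    volOn m univ Y = ∑ c ∈ comps m Y, volOn m univ c :=
  eG_eq_sum_comps m hsym Y univ

theorem sum_biUnion_of_subset_comps (m : V → V → ℕ) (hsym : ∀ x y, m x y = m y x)
    {Y : Finset V} {F : Finset (Finset V)} (hF : F ⊆ comps m Y) (f : V → ℕ) :
    ∑ x ∈ F.biUnion id, f x = ∑ c ∈ F, ∑ x ∈ c, f x :=
  Finset.sum_biUnion ((comps_pairwiseDisjoint hsym Y).subset (by exact_mod_cast hF))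

end Comps

section Main
variable {V : Type*} [Fintype V] [DecidableEq V]

theorem badset_mono_kappa {m : V → V → ℕ} {κ' κ : ℝ} (h : κ' ≤ κ) {A X : Finset V}
    (hb : BadSet m κ' A X) : BadSet m κ A X := by
  obtain ⟨h1, h2, h3, h4, h5⟩ := hb
  refine ⟨h1, h2, h3, h4, lt_of_lt_of_le h5 ?_⟩
  exact mul_le_mul_of_nonneg_right h (Nat.cast_nonneg _)

theorem isol_mono {m : V → V → ℕ} {κ' κ : ℝ} (h : κ' ≤ κ) : Isol m κ' ⊆ Isol m κ := by
  intro v hv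
  rw [Isol, Finset.mem_filter] at hv ⊢
  obtain ⟨_, X, hX, hvX⟩ := hv
  exact ⟨Finset.mem_univ v, X, badset_mono_kappa h hX, hvX⟩

set_option maxHeartbeats 3000000 in
theorem step_lemma
    (m : V → V → ℕ) (hsym : ∀ x y, m x y = m y x)
    (n : ℕ) (h2n : eG m Finset.univ Finset.univ = 2 * n)
    (ε κ : ℝ) (hε0 : 0 < ε) (hε : ε < 1 / 2) (hκ : 0 < κ)
    (hiso : (volOn m Finset.univ (Isol m κ) : ℝ) ≤ ε * n)
    (W Sb : Finset V)
    (hWiso : ∀ v ∈ W, BadSet m ((1 - ε) * κ) Finset.univ (compo m W v))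
    (hS : BadSet m ((1 - ε) * κ) (Finset.univ \ W) Sb) :
    ∀ v ∈ W ∪ Sb, BadSet m ((1 - ε) * κ) Finset.univ (compo m (W ∪ Sb) v) := by
  have hκε : (0:ℝ) < (1 - ε) * κ := by nlinarith
  have hκεκ : (1 - ε) * κ ≤ κ := by nlinarith
  set κε : ℝ := (1 - ε) * κ with hκεdef
  clear_value κε
  set H : Finset V := Finset.univ \ W with hHdef
  obtain ⟨hSH, hSne, hSconn, hSvol, hScut⟩ := hS
  -- basic disjointness
  have hSWdisj : Disjoint Sb W := by
    rw [Finset.disjoint_left]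
    intro x hx
    have := hSH hx
    rw [hHdef, Finset.mem_sdiff] at this
    exact this.2
  set A : Finset V := W.filter (fun w => 0 < eG m (compo m W w) Sb) with hAdef
  have hAW : A ⊆ W := Finset.filter_subset _ _
  have hSA : Disjoint Sb A := hSWdisj.mono_right hAW
  have hAcomp : ∀ x ∈ A, compo m W x ⊆ A := by
    intro x hx u hu
    rw [hAdef, Finset.mem_filter] at hx ⊢
    refine ⟨compo_subset m W x hu, ?_⟩
    rw [compo_mem_eq hsym hu]
    exact hx.2
  have hSWA : eG m Sb (W \ A) = 0 := by
    apply eG_zero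
    intro x hx y hy
    rw [Finset.mem_sdiff] at hy
    by_contra hne
    apply hy.2
    rw [hAdef, Finset.mem_filter]
    refine ⟨hy.1, ?_⟩
    have h1 : m y x ≤ eG m (compo m W y) Sb := le_eG m (mem_compo_self hy.1) hx
    have h2 : 0 < m y x := by rw [hsym y x]; exact Nat.pos_of_ne_zero hne
    omega
  have hAWA : eG m A (W \ A) = 0 := by
    apply eG_zero
    intro x hx y hy
    rw [Finset.mem_sdiff] at hy
    by_contra hne
    apply hy.2
    apply hAcomp x hx
    rw [mem_compo]
    refine ⟨hy.1, Relation.ReflTransGen.single ⟨hAW hx, hy.1, Nat.pos_of_ne_zero hne⟩⟩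
  have hAbad : ∀ c ∈ comps m A, BadSet m κε Finset.univ c := by
    intro c hc
    rw [mem_comps] at hc
    obtain ⟨v, hv, rfl⟩ := hc
    have hvW : v ∈ W := hAW hv
    have heq : compo m A v = compo m W v := by
      apply compo_eq_of (mem_compo_self hvW) (hAcomp v hv) (hWiso v hvW).2.2.1
      intro x hx y hy hyZ
      exact compo_no_edge x hx y (hAW hy) hyZ
    rw [heq]
    exact hWiso v hvW
  set C : Finset V := Sb ∪ A with hCdef
  have hCWS : C ⊆ W ∪ Sb := by
    rw [hCdef]
    exact Finset.union_subset (Finset.subset_union_right) (hAW.trans Finset.subset_union_left)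
  -- connectivity of C
  have hreachS : ∀ z ∈ C, ∃ s ∈ Sb, creach m C z s := by
    intro z hz
    rw [hCdef, Finset.mem_union] at hz
    rcases hz with hz | hz
    · exact ⟨z, hz, Relation.ReflTransGen.refl⟩
    · have hzA := hz
      rw [hAdef, Finset.mem_filter] at hz
      obtain ⟨p, hp, q, hq, hpq⟩ := exists_of_eG_pos m hz.2
      have h1 : creach m (compo m W z) z p := (hWiso z hz.1).2.2.1 z (mem_compo_self hz.1) p hp
      have h2 : creach m C z p :=
        creach_mono ((hAcomp z hzA).trans Finset.subset_union_right) h1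
      refine ⟨q, hq, Relation.ReflTransGen.tail h2 ?_⟩
      exact ⟨(hAcomp z hzA).trans Finset.subset_union_right hp,
        Finset.subset_union_left hq, hpq⟩
  have hCconn : ConnOn m C := by
    intro x hx y hy
    obtain ⟨sx, hsx, hrx⟩ := hreachS x hx
    obtain ⟨sy, hsy, hry⟩ := hreachS y hy
    have hmid : creach m C sx sy :=
      creach_mono (Finset.subset_union_left) (hSconn sx hsx sy hsy)
    exact creach_trans (creach_trans hrx hmid) (creach_symm hsym hry)
  -- ============ arithmetic part ============
  set Y : Finset V := Finset.univ \ C with hYdef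
  set s : ℕ := volOn m H Sb with hsdef
  set e1 : ℕ := eG m Sb A with he1def
  set a : ℕ := volOn m Finset.univ A with hadef
  set w : ℕ := volOn m Finset.univ W with hwdef
  set cutS : ℕ := eG m Sb (H \ Sb) with hcutSdef
  clear_value H A C Y s e1 a w cutS
  have hHW : H ∪ W = Finset.univ := by
    rw [hHdef]; ext x
    simp only [Finset.mem_union, Finset.mem_sdiff, Finset.mem_univ, true_and]
    tauto
  have hdisjHW : Disjoint H W := by rw [hHdef]; exact Finset.sdiff_disjoint
  have hdisjCY : Disjoint C Y := by rw [hYdef]; exact Finset.sdiff_disjoint.symm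
  have hdisjAY : Disjoint A Y := hdisjCY.mono_left (by rw [hCdef]; exact Finset.subset_union_right)
  have hdisjSY : Disjoint Sb Y := hdisjCY.mono_left (by rw [hCdef]; exact Finset.subset_union_left)
  have hSbW : eG m Sb W = e1 := by
    rw [← Finset.union_sdiff_of_subset hAW, eG_union_right m Sb Finset.disjoint_sdiff, hSWA,
      ← he1def]
    omega
  have hvolSb : eG m Sb Finset.univ = s + e1 := by
    rw [← hHW, eG_union_right m Sb hdisjHW, hSbW, hsdef]
    rfl
  have hsplit1 : eG m Sb (Finset.univ \ Sb) = cutS + e1 := by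
    have heq : Finset.univ \ Sb = (H \ Sb) ∪ W := by
      rw [hHdef]; ext x
      simp only [Finset.mem_sdiff, Finset.mem_union, Finset.mem_univ, true_and]
      have h1 : x ∈ Sb → x ∉ W := fun h => Finset.disjoint_left.mp hSWdisj h
      tauto
    rw [heq, eG_union_right m Sb (hdisjHW.mono_left Finset.sdiff_subset), hSbW,
      ← hcutSdef]
  have hsplit2 : eG m Sb (Finset.univ \ Sb) = e1 + eG m Sb Y := by
    have heq : Finset.univ \ Sb = A ∪ Y := by
      rw [hYdef, hCdef]; ext x
      simp only [Finset.mem_sdiff, Finset.mem_union, Finset.mem_univ, true_and]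
      have h1 : x ∈ A → x ∉ Sb := fun h => Finset.disjoint_right.mp hSA h
      tauto
    rw [heq, eG_union_right m Sb hdisjAY, ← he1def]
  have hSbY : eG m Sb Y = cutS := by omega
  have hAU : eG m A (Finset.univ \ A) = e1 + eG m A Y := by
    have heq : Finset.univ \ A = Sb ∪ Y := by
      rw [hYdef, hCdef]; ext x
      simp only [Finset.mem_sdiff, Finset.mem_union, Finset.mem_univ, true_and]
      have h1 : x ∈ Sb → x ∉ A := fun h => Finset.disjoint_left.mp hSA h
      tauto
    rw [heq, eG_union_right m A hdisjSY, eG_comm m hsym A Sb, ← he1def]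
  have hvolC : volOn m Finset.univ C = s + e1 + a := by
    show eG m C Finset.univ = _
    rw [hCdef, eG_union_left m Finset.univ hSA, hvolSb, hadef]
    rfl
  have hCY : volOn m Finset.univ C + volOn m Finset.univ Y = 2 * n := by
    have hun : C ∪ Y = Finset.univ := by
      rw [hYdef]; ext x
      simp only [Finset.mem_union, Finset.mem_sdiff, Finset.mem_univ, true_and]
      tauto
    show eG m C Finset.univ + eG m Y Finset.univ = _
    rw [← eG_union_left m Finset.univ hdisjCY, hun, h2n]
  have hCcutY : eG m C Y = cutS + eG m A Y := by
    rw [hCdef, eG_union_left m Y hSA, hSbY]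
  have htotal : volOn m H H + eG m H W + w = 2 * n := by
    have h1 := eG_union_right m H hdisjHW
    rw [hHW] at h1
    have h2 := eG_union_left m Finset.univ hdisjHW
    rw [hHW] at h2
    rw [hwdef]
    show eG m H H + eG m H W + eG m W Finset.univ = 2 * n
    rw [← h1, ← h2]
    exact h2n
  have he1HW : e1 ≤ eG m H W := by rw [he1def]; exact eG_mono m hSH hAW
  have he1a : e1 ≤ a := by
    have h1 : eG m Sb A ≤ eG m Finset.univ A := eG_mono m (Finset.subset_univ _) (le_refl _)
    have h2 : eG m Finset.univ A = eG m A Finset.univ := eG_comm m hsym _ _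
    rw [he1def, hadef]
    exact le_trans h1 (le_of_eq h2)
  have haw : a ≤ w := by rw [hadef, hwdef]; exact eG_mono m hAW (le_refl _)
  have hWIsol : W ⊆ Isol m κε := by
    intro v hv
    rw [Isol, Finset.mem_filter]
    exact ⟨Finset.mem_univ v, compo m W v, hWiso v hv, mem_compo_self hv⟩
  have hwiso : (w : ℝ) ≤ ε * n := by
    refine le_trans ?_ hiso
    have h1 : w ≤ volOn m Finset.univ (Isol m κ) := by
      rw [hwdef]; exact eG_mono m (hWIsol.trans (isol_mono hκεκ)) (le_refl _)
    exact_mod_cast h1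
  have hAcutU : (eG m A (Finset.univ \ A) : ℝ) ≤ κε * a := by
    rw [eG_eq_sum_comps m hsym A (Finset.univ \ A)]
    have h2 : (a:ℝ) = ∑ c ∈ comps m A, (volOn m Finset.univ c : ℝ) := by
      rw [hadef, volOn_eq_sum_comps m hsym A]
      push_cast
      rfl
    rw [h2, Finset.mul_sum]
    push_cast
    refine Finset.sum_le_sum fun c hc => ?_
    have hcsub : c ⊆ A := by
      obtain ⟨v, hv, rfl⟩ := mem_comps.mp hc
      exact compo_subset m A v
    have hmono : eG m c (Finset.univ \ A) ≤ eG m c (Finset.univ \ c) :=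
      eG_mono m (le_refl _) (Finset.sdiff_subset_sdiff (le_refl _) hcsub)
    have hbad := (hAbad c hc).2.2.2.2
    calc (eG m c (Finset.univ \ A) : ℝ) ≤ (eG m c (Finset.univ \ c) : ℝ) := by exact_mod_cast hmono
    _ ≤ κε * (volOn m Finset.univ c : ℝ) := le_of_lt hbad
  have hAYcut : (eG m A Y : ℝ) ≤ κε * a - e1 := by
    have h := hAcutU
    rw [hAU] at h
    push_cast at h
    linarith
  have hcutC : (eG m C Y : ℝ) < κε * s + (κε * a - e1) := by
    rw [hCcutY]
    push_cast
    linarith [hScut, hAYcut]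
  by_cases hvol : volOn m Finset.univ C ≤ n
  · -- C is a κε-bad set of G; identify the new components
    have hCbad : BadSet m κε Finset.univ C := by
      refine ⟨Finset.subset_univ _, hSne.mono (hCdef ▸ Finset.subset_union_left), hCconn, ?_, ?_⟩
      · have h1 : volOn m Finset.univ Finset.univ = 2 * n := h2n
        rw [h1]
        have : 2 * volOn m Finset.univ C ≤ 2 * n := by omega
        exact_mod_cast this
      · have h1 : Finset.univ \ C = Y := hYdef.symm
        rw [h1, hvolC]
        refine lt_of_lt_of_le hcutC ?_
        push_cast
        nlinarith [Nat.cast_nonneg (α := ℝ) e1]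
    intro v hv
    by_cases hvC : v ∈ C
    · have heq : compo m (W ∪ Sb) v = C := by
        apply compo_eq_of hvC hCWS hCconn
        intro x hx y hy hyC
        have hyW : y ∈ W \ A := by
          rw [Finset.mem_sdiff]
          rcases Finset.mem_union.mp hy with h | h
          · exact ⟨h, fun hA => hyC (hCdef ▸ Finset.mem_union_right _ hA)⟩
          · exact absurd (hCdef ▸ Finset.mem_union_left _ h) hyC
        rcases Finset.mem_union.mp (hCdef ▸ hx) with hxS | hxA
        · exact eG_pointwise_zero m hSWA hxS hyW
        · exact eG_pointwise_zero m hAWA hxA hyW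
      rw [heq]
      exact hCbad
    · have hvW : v ∈ W := by
        rcases Finset.mem_union.mp hv with h | h
        · exact h
        · exact absurd (hCdef ▸ Finset.mem_union_left _ h) hvC
      have hvA : v ∉ A := fun h => hvC (hCdef ▸ Finset.mem_union_right _ h)
      have heq : compo m (W ∪ Sb) v = compo m W v := by
        apply compo_eq_of (mem_compo_self hvW)
          ((compo_subset m W v).trans Finset.subset_union_left) (hWiso v hvW).2.2.1
        intro x hx y hy hyZ
        rcases Finset.mem_union.mp hy with hyW | hyS
        · exact compo_no_edge x hx y hyW hyZ
        · by_contra hne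
          have hxW : x ∈ W := compo_subset m W v hx
          have hxA : x ∈ A := by
            rw [hAdef, Finset.mem_filter]
            refine ⟨hxW, ?_⟩
            have h1 : m x y ≤ eG m (compo m W x) Sb := le_eG m (mem_compo_self hxW) hyS
            have h2 : 0 < m x y := Nat.pos_of_ne_zero hne
            omega
          apply hvA
          have hcc : compo m W x = compo m W v := compo_mem_eq hsym hx
          have := hAcomp x hxA
          rw [hcc] at this
          exact this (mem_compo_self hvW)
      rw [heq]
      exact hWiso v hvW
  · -- overfull case : contradiction with `hiso`
    exfalso
    have hvolY : volOn m Finset.univ Y < n := by omega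
    have hYfacts : ∀ c ∈ comps m Y, eG m c (Finset.univ \ c) = eG m c C ∧ c ⊆ Y := by
      intro c hc
      obtain ⟨v, hvY, rfl⟩ := mem_comps.mp hc
      have hcY : compo m Y v ⊆ Y := compo_subset m Y v
      have hzero : eG m (compo m Y v) (Y \ compo m Y v) = 0 :=
        eG_zero m (fun x hx y hy =>
          compo_no_edge x hx y (Finset.mem_sdiff.mp hy).1 (Finset.mem_sdiff.mp hy).2)
      have heq : Finset.univ \ compo m Y v = (Y \ compo m Y v) ∪ C := by
        ext x
        constructor
        · intro hx
          have hxc : x ∉ compo m Y v := (Finset.mem_sdiff.mp hx).2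
          by_cases hC : x ∈ C
          · exact Finset.mem_union_right _ hC
          · have hY : x ∈ Y := by rw [hYdef, Finset.mem_sdiff]; exact ⟨Finset.mem_univ x, hC⟩
            exact Finset.mem_union_left _ (Finset.mem_sdiff.mpr ⟨hY, hxc⟩)
        · intro hx
          rw [Finset.mem_sdiff]
          refine ⟨Finset.mem_univ x, ?_⟩
          rcases Finset.mem_union.mp hx with h | h
          · exact (Finset.mem_sdiff.mp h).2
          · intro hxc
            exact Finset.disjoint_left.mp hdisjCY h (hcY hxc)
      refine ⟨?_, hcY⟩
      rw [heq, eG_union_right m _ (hdisjCY.symm.mono_left Finset.sdiff_subset), hzero, zero_add]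
    classical
    set badF : Finset (Finset V) :=
      (comps m Y).filter
        (fun c => (eG m c (Finset.univ \ c) : ℝ) < κ * (volOn m Finset.univ c : ℝ)) with hbadFdef
    set goodF : Finset (Finset V) :=
      (comps m Y).filter
        (fun c => ¬ ((eG m c (Finset.univ \ c) : ℝ) < κ * (volOn m Finset.univ c : ℝ))) with hgoodFdef
    clear_value badF goodF
    have hbadIsol : badF.biUnion id ⊆ Isol m κ := by
      intro x hx
      obtain ⟨c, hc, hxc⟩ := Finset.mem_biUnion.mp hx
      rw [hbadFdef, Finset.mem_filter] at hc
      obtain ⟨hcY, hcP⟩ := hc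
      obtain ⟨v, hvY, hveq⟩ := mem_comps.mp hcY
      have hvol2 : 2 * (volOn m Finset.univ c : ℝ) ≤ (volOn m Finset.univ Finset.univ : ℝ) := by
        have hle : volOn m Finset.univ c ≤ volOn m Finset.univ Y := by
          rw [← hveq]
          exact eG_mono m (compo_subset m Y v) (le_refl _)
        have h2 : volOn m Finset.univ Finset.univ = 2 * n := h2n
        rw [h2]
        have h3 : 2 * volOn m Finset.univ c ≤ 2 * n := by omega
        exact_mod_cast h3
      have hconn : ConnOn m c := by rw [← hveq]; exact compo_connOn hsym
      have hbadc : BadSet m κ Finset.univ c :=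
        ⟨Finset.subset_univ _, ⟨x, hxc⟩, hconn, hvol2, hcP⟩
      rw [Isol, Finset.mem_filter]
      exact ⟨Finset.mem_univ x, c, hbadc, hxc⟩
    set bset : Finset V := A ∪ badF.biUnion id with hbsetdef
    clear_value bset
    have hbadsubY : badF.biUnion id ⊆ Y := by
      intro x hx
      obtain ⟨c, hc, hxc⟩ := Finset.mem_biUnion.mp hx
      rw [hbadFdef, Finset.mem_filter] at hc
      exact (hYfacts c hc.1).2 hxc
    have hdisjAbad : Disjoint A (badF.biUnion id) := hdisjAY.mono_right hbadsubY
    have hbsetIsol : bset ⊆ Isol m κ := by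
      rw [hbsetdef]
      exact Finset.union_subset ((hAW.trans hWIsol).trans (isol_mono hκεκ)) hbadIsol
    have hvolbset : volOn m Finset.univ bset = a + ∑ c ∈ badF, volOn m Finset.univ c := by
      have h1 : volOn m Finset.univ bset
          = volOn m Finset.univ A + volOn m Finset.univ (badF.biUnion id) := by
        rw [hbsetdef]; exact eG_union_left m Finset.univ hdisjAbad
      have h2 : volOn m Finset.univ (badF.biUnion id) = ∑ c ∈ badF, volOn m Finset.univ c := by
        have hsub : badF ⊆ comps m Y := by rw [hbadFdef]; exact Finset.filter_subset _ _
        exact sum_biUnion_of_subset_comps m hsym hsub (fun x => ∑ y ∈ Finset.univ, m x y)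
      rw [h1, h2, ← hadef]
    have hsplitgb : (∑ c ∈ badF, volOn m Finset.univ c)
        + (∑ c ∈ goodF, volOn m Finset.univ c) = volOn m Finset.univ Y := by
      rw [volOn_eq_sum_comps m hsym Y, hbadFdef, hgoodFdef]
      exact Finset.sum_filter_add_sum_filter_not _ _ _
    set Dg : ℕ := ∑ c ∈ goodF, volOn m Finset.univ c with hDgdef
    clear_value Dg
    have hgoodbound : κ * (Dg : ℝ) ≤ (eG m C Y : ℝ) := by
      have h1 : κ * (Dg : ℝ) = ∑ c ∈ goodF, κ * (volOn m Finset.univ c : ℝ) := by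
        rw [hDgdef]; push_cast; rw [Finset.mul_sum]
      have h2 : ∀ c ∈ goodF, κ * (volOn m Finset.univ c : ℝ) ≤ (eG m c C : ℝ) := by
        intro c hc
        rw [hgoodFdef, Finset.mem_filter] at hc
        have hnc := hc.2
        push_neg at hnc
        calc κ * (volOn m Finset.univ c : ℝ) ≤ (eG m c (Finset.univ \ c) : ℝ) := hnc
        _ = (eG m c C : ℝ) := by rw [(hYfacts c hc.1).1]
      have h3 : (∑ c ∈ goodF, (eG m c C : ℝ)) ≤ ∑ c ∈ comps m Y, (eG m c C : ℝ) := by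
        refine Finset.sum_le_sum_of_subset_of_nonneg ?_ (fun c _ _ => Nat.cast_nonneg _)
        rw [hgoodFdef]; exact Finset.filter_subset _ _
      have h4 : (∑ c ∈ comps m Y, (eG m c C : ℝ)) = (eG m Y C : ℝ) := by
        rw [eG_eq_sum_comps m hsym Y C]; push_cast; rfl
      have h5 : eG m Y C = eG m C Y := eG_comm m hsym _ _
      calc κ * (Dg : ℝ) = ∑ c ∈ goodF, κ * (volOn m Finset.univ c : ℝ) := h1
      _ ≤ ∑ c ∈ goodF, (eG m c C : ℝ) := Finset.sum_le_sum h2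
      _ ≤ ∑ c ∈ comps m Y, (eG m c C : ℝ) := h3
      _ = (eG m Y C : ℝ) := h4
      _ = (eG m C Y : ℝ) := by rw [h5]
    have hs0 : 0 < s := by
      by_contra hcon
      push_neg at hcon
      have hs00 : s = 0 := by omega
      rw [hs00] at hScut
      push_cast at hScut
      nlinarith [Nat.cast_nonneg (α := ℝ) cutS]
    have hsHH : 2 * s ≤ volOn m H H := by exact_mod_cast hSvol
    have hse1n : s + e1 ≤ n := by omega
    have hIso1 : volOn m Finset.univ bset ≤ volOn m Finset.univ (Isol m κ) :=
      eG_mono m hbsetIsol (le_refl _)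
    have hkey : a + volOn m Finset.univ Y ≤ volOn m Finset.univ (Isol m κ) + Dg := by omega
    have hvolYR : (volOn m Finset.univ Y : ℝ) = 2 * n - s - e1 - a := by
      have h1 : volOn m Finset.univ Y + (s + e1 + a) = 2 * n := by omega
      have h2 : (volOn m Finset.univ Y : ℝ) + ((s : ℝ) + (e1 : ℝ) + (a : ℝ)) = 2 * (n : ℝ) := by
        exact_mod_cast h1
      linarith
    have hIsoR : (a : ℝ) + (volOn m Finset.univ Y : ℝ)
        ≤ (volOn m Finset.univ (Isol m κ) : ℝ) + (Dg : ℝ) := by exact_mod_cast hkey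
    have he10 : (0 : ℝ) ≤ (e1 : ℝ) := Nat.cast_nonneg _
    have ha0 : (0 : ℝ) ≤ (a : ℝ) := Nat.cast_nonneg _
    have hw0 : (0 : ℝ) ≤ (w : ℝ) := Nat.cast_nonneg _
    have hc2 : (eG m C Y : ℝ) < (1 - ε) * κ * (s : ℝ) + ((1 - ε) * κ * (a : ℝ) - (e1 : ℝ)) := by
      rw [← hκεdef]; exact hcutC
    by_cases hκ1 : κ ≤ 1
    · have h6 : κ * (e1 : ℝ) ≤ (e1 : ℝ) := by nlinarith
      have hstep1 : κ * (Dg : ℝ) < κ * ((1 - ε) * ((s : ℝ) + (a : ℝ)) - (e1 : ℝ)) := by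
        nlinarith [hgoodbound, hc2]
      have hDgR : (Dg : ℝ) < (1 - ε) * ((s : ℝ) + (a : ℝ)) - (e1 : ℝ) :=
        (mul_lt_mul_iff_right₀ hκ).mp hstep1
      have hsR : 2 * (s : ℝ) + (w : ℝ) ≤ 2 * (n : ℝ) := by
        have h7 : 2 * s + w ≤ 2 * n := by omega
        exact_mod_cast h7
      have hawR : (a : ℝ) ≤ (w : ℝ) := by exact_mod_cast haw
      have hP1 : (2 - ε) * (s : ℝ) ≤ (2 - ε) * ((n : ℝ) - (w : ℝ) / 2) := by
        apply mul_le_mul_of_nonneg_left _ (by linarith)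
        linarith
      have hP2 : (1 - ε) * (a : ℝ) ≤ (1 - ε) * (w : ℝ) :=
        mul_le_mul_of_nonneg_left hawR (by linarith)
      have hεw : 0 ≤ ε * (w : ℝ) := mul_nonneg hε0.le hw0
      nlinarith [hiso, hIsoR, hvolYR, hDgR, hP1, hP2, hεw]
    · push_neg at hκ1
      have hDg0 : Dg = 0 := by
        rw [hDgdef]
        refine Finset.sum_eq_zero fun c hc => ?_
        have h1 : eG m c C ≤ volOn m Finset.univ c := eG_mono m (le_refl _) (Finset.subset_univ _)
        have h1R : (eG m c C : ℝ) ≤ (volOn m Finset.univ c : ℝ) := by exact_mod_cast h1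
        rw [hgoodFdef, Finset.mem_filter] at hc
        have hnc := hc.2
        push_neg at hnc
        rw [(hYfacts c hc.1).1] at hnc
        have h2 : (volOn m Finset.univ c : ℝ) ≤ 0 := by
          nlinarith [Nat.cast_nonneg (α := ℝ) (volOn m Finset.univ c)]
        have h3 : (volOn m Finset.univ c : ℝ) = 0 :=
          le_antisymm h2 (Nat.cast_nonneg _)
        exact_mod_cast h3
      have hnpos : 0 < n := by omega
      have hfin : (n : ℝ) ≤ (volOn m Finset.univ (Isol m κ) : ℝ) := by
        have h1 : n ≤ volOn m Finset.univ (Isol m κ) := by omega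
        exact_mod_cast h1
      have hn0R : (0 : ℝ) < (n : ℝ) := by exact_mod_cast hnpos
      nlinarith [hiso, hfin]

end Main

/-- run the removal process `G₀ = G`, `Gᵢ = Gᵢ₋₁ \ Sᵢ` where each `Sᵢ`
is a `κ_ε`-bad set of `Gᵢ₋₁` (with `κ_ε = (1-ε)κ`).  If the `κ`-isolated vertices of
`G` have volume at most `εn`, then every removed vertex is `κ_ε`-isolated in `G`:
`⋃ᵢ Sᵢ ⊆ Isol_{κ_ε}(G) ⊆ Isol_κ(G)`. -/
theorem stmt3 {V : Type*} [Fintype V] [DecidableEq V]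
    (m : V → V → ℕ) (hsym : ∀ x y, m x y = m y x)
    (n : ℕ) (h2n : eG m Finset.univ Finset.univ = 2 * n)
    (ε κ : ℝ) (hε0 : 0 < ε) (hε : ε < 1 / 2) (hκ : 0 < κ)
    (hiso : (volOn m Finset.univ (Isol m κ) : ℝ) ≤ ε * n)
    (τ : ℕ) (S Gs : ℕ → Finset V)
    (hG : ∀ i, Gs i = Finset.univ \ (Finset.range i).biUnion (fun j => S (j + 1)))
    (hbad : ∀ i < τ, BadSet m ((1 - ε) * κ) (Gs i) (S (i + 1))) :
    (∀ i < τ, S (i + 1) ⊆ Isol m ((1 - ε) * κ)) ∧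
      Isol m ((1 - ε) * κ) ⊆ Isol m κ := by
  have hκεκ : (1 - ε) * κ ≤ κ := by nlinarith
  have inv : ∀ i, i ≤ τ →
      ∀ v ∈ (Finset.range i).biUnion (fun j => S (j + 1)),
        BadSet m ((1 - ε) * κ) Finset.univ
          (compo m ((Finset.range i).biUnion (fun j => S (j + 1))) v) := by
    intro i
    induction i with
    | zero =>
      intro _ v hv
      simp at hv
    | succ k ih =>
      intro hk v hv
      have hWk1 : (Finset.range (k + 1)).biUnion (fun j => S (j + 1))
          = (Finset.range k).biUnion (fun j => S (j + 1)) ∪ S (k + 1) := by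
        rw [Finset.range_add_one, Finset.biUnion_insert, Finset.union_comm]
      rw [hWk1] at hv ⊢
      refine step_lemma m hsym n h2n ε κ hε0 hε hκ hiso _ _ (ih (by omega)) ?_ v hv
      rw [← hG k]
      exact hbad k (by omega)
  constructor
  · intro i hi v hv
    have hvW : v ∈ (Finset.range (i + 1)).biUnion (fun j => S (j + 1)) :=
      Finset.mem_biUnion.mpr ⟨i, Finset.mem_range.mpr (Nat.lt_succ_self i), hv⟩
    have hb := inv (i + 1) (by omega) v hvW
    rw [Isol, Finset.mem_filter]
    exact ⟨Finset.mem_univ v, _, hb, mem_compo_self hvW⟩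
  · exact isol_mono hκεκ
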